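/- Let A_1, …, A_m be a finite measurable partition of M into pairwise disjoint sets with ν(A_j) > 0 for every j, and suppose that for each j there is a constant d_j ∈ ℝ^n with d(X, τ) = d_j for all X ∈ S(A_j). Then for every t ∈ ℝ and all components a, b ∈ {1, …, n}: ∑_{j=1}^m (1/ν(A_j)) [ T_t(A_j)_a T_t(A_j)_b − T_{t+τ}(S(A_j))_a T_{t+τ}(S(A_j))_b ] = −( ∫_M d_a(X, t+τ) d_b(X, t+τ) dν(X) − ∫_M d_a(X, t) d_b(X, t) dν(X) ). (This identity is the core of the passage from Eq. (37) to Eq. (38) in the paper's entropy production calculation, combining Eq. (29) with the sum rule Eq. (sumrule*).) -/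

import Mathlib

open MeasureTheory

/-- the core identity of the entropy production calculation
(from Eq. (37) to Eq. (38)):
`∑_j (1/ν(A_j)) [ T_t(A_j)_a T_t(A_j)_b − T_{t+τ}(S(A_j))_a T_{t+τ}(S(A_j))_b ]
 = −( ∫_M d_a(X,t+τ) d_b(X,t+τ) dν − ∫_M d_a(X,t) d_b(X,t) dν )`,
where `T_t(A)_a = ∫_A d_a(X,t) dν`. -/
theorem entropy_production_core_identity {M : Type*} [MeasurableSpace M]
    (ν : Measure M) [IsFiniteMeasure ν] (hν : 0 < ν Set.univ)
    {n : ℕ} (hn : 1 ≤ n) (d : M → ℝ → Fin n → ℝ)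
    (hdmeas : ∀ s : ℝ, Measurable fun X => d X s)
    (hdbd : ∀ s : ℝ, ∃ C : ℝ, ∀ X : M, ‖d X s‖ ≤ C)
    (S : M ≃ M) (hS : MeasurePreserving S ν ν) (hS' : MeasurePreserving S.symm ν ν)
    (τ : ℝ)
    (hcocycle : ∀ (X : M) (t : ℝ), d X (t + τ) = d X τ + d (S.symm X) t)
    (m : ℕ) (A : Fin m → Set M)
    (hAmeas : ∀ j, MeasurableSet (A j))
    (hAdisj : ∀ i j, i ≠ j → Disjoint (A i) (A j))
    (hAcover : (⋃ j, A j) = Set.univ)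
    (hApos : ∀ j, 0 < ν (A j))
    (dj : Fin m → Fin n → ℝ)
    (hdj : ∀ j, ∀ X ∈ S '' A j, d X τ = dj j) :
    ∀ (t : ℝ) (a b : Fin n),
      (∑ j, (1 / (ν (A j)).toReal) *
          ((∫ X in A j, d X t a ∂ν) * (∫ X in A j, d X t b ∂ν)
            - (∫ X in S '' A j, d X (t + τ) a ∂ν)
                * (∫ X in S '' A j, d X (t + τ) b ∂ν)))
        = -((∫ X, d X (t + τ) a * d X (t + τ) b ∂ν)
              - ∫ X, d X t a * d X t b ∂ν) := by
  intro t a b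
  -- measurability of components
  have hmeasc : ∀ (s : ℝ) (c : Fin n), Measurable fun X => d X s c := fun s c =>
    (measurable_pi_apply c).comp (hdmeas s)
  -- integrability of components
  have hint : ∀ (s : ℝ) (c : Fin n), Integrable (fun X => d X s c) ν := by
    intro s c
    obtain ⟨C, hC⟩ := hdbd s
    exact ⟨(hmeasc s c).aestronglyMeasurable,
      HasFiniteIntegral.of_bounded (C := C)
        (Filter.Eventually.of_forall fun X => (norm_le_pi_norm (d X s) c).trans (hC X))⟩
  -- integrability of products of components
  have hint2 : ∀ (s : ℝ) (c e : Fin n), Integrable (fun X => d X s c * d X s e) ν := by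
    intro s c e
    obtain ⟨C, hC⟩ := hdbd s
    refine ⟨((hmeasc s c).mul (hmeasc s e)).aestronglyMeasurable,
      HasFiniteIntegral.of_bounded (C := |C| * |C|)
        (Filter.Eventually.of_forall fun X => ?_)⟩
    have h1 : ‖d X s c‖ ≤ |C| := ((norm_le_pi_norm (d X s) c).trans (hC X)).trans (le_abs_self C)
    have h2 : ‖d X s e‖ ≤ |C| := ((norm_le_pi_norm (d X s) e).trans (hC X)).trans (le_abs_self C)
    calc ‖d X s c * d X s e‖ = ‖d X s c‖ * ‖d X s e‖ := norm_mul _ _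
      _ ≤ |C| * |C| := mul_le_mul h1 h2 (norm_nonneg _) (abs_nonneg _)
  -- the measurable equiv
  let Se : M ≃ᵐ M := ⟨S, hS.measurable, hS'.measurable⟩
  have hemb : MeasurableEmbedding (S : M → M) := Se.measurableEmbedding
  have himg : ∀ j, MeasurableSet (S '' A j) := fun j =>
    (Se.measurableSet_image).mpr (hAmeas j)
  -- decomposition of global integrals over a partition
  have hdecomp : ∀ (f : M → ℝ), Integrable f ν → ∀ (B : Fin m → Set M),
      (∀ j, MeasurableSet (B j)) → (∀ i j, i ≠ j → Disjoint (B i) (B j)) →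
      (⋃ j, B j) = Set.univ → ∫ x, f x ∂ν = ∑ j, ∫ x in B j, f x ∂ν := by
    intro f hf B hBm hBd hBc
    rw [← setIntegral_univ, ← hBc,
      integral_iUnion hBm (fun i j h => hBd i j h) hf.integrableOn, tsum_fintype]
  -- the images form a partition too
  have himgd : ∀ i j, i ≠ j → Disjoint (S '' A i) (S '' A j) := fun i j h =>
    (Set.disjoint_image_iff S.injective).mpr (hAdisj i j h)
  have himgc : (⋃ j, S '' A j) = Set.univ := by
    rw [← Set.image_iUnion, hAcover, Set.image_univ, Equiv.range_eq_univ]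
  -- pointwise identity on A j
  have hpt : ∀ j, ∀ X ∈ A j, ∀ c : Fin n, d (S X) (t + τ) c = dj j c + d X t c := by
    intro j X hX c
    have h1 := hcocycle (S X) t
    have h2 := hdj j (S X) ⟨X, hX, rfl⟩
    rw [h1, h2]
    simp [Equiv.symm_apply_apply]
  have hconst : ∀ j (c : ℝ), IntegrableOn (fun _ : M => c) (A j) ν :=
    fun j c => (integrableOn_const_iff).mpr (Or.inr (measure_lt_top ν (A j)))
  -- key transformation for single components
  have key1 : ∀ j (c : Fin n), (∫ X in S '' A j, d X (t + τ) c ∂ν)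
      = (ν (A j)).toReal * dj j c + ∫ X in A j, d X t c ∂ν := by
    intro j c
    rw [hS.setIntegral_image_emb hemb]
    rw [setIntegral_congr_fun (hAmeas j) (g := fun X => dj j c + d X t c)
      (fun X hX => hpt j X hX c)]
    rw [integral_add (hconst j _) ((hint t c).integrableOn)]
    rw [setIntegral_const]
    simp [smul_eq_mul, Measure.real]
  -- key transformation for products
  have key2 : ∀ j, (∫ X in S '' A j, d X (t + τ) a * d X (t + τ) b ∂ν)
      = (ν (A j)).toReal * (dj j a * dj j b)
        + dj j a * (∫ X in A j, d X t b ∂ν)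
        + dj j b * (∫ X in A j, d X t a ∂ν)
        + ∫ X in A j, d X t a * d X t b ∂ν := by
    intro j
    rw [hS.setIntegral_image_emb hemb]
    rw [setIntegral_congr_fun (hAmeas j)
      (g := fun X => dj j a * dj j b + dj j a * d X t b + dj j b * d X t a
        + d X t a * d X t b)
      (fun X hX => by rw [hpt j X hX a, hpt j X hX b]; ring)]
    have h4 : (∫ x in A j, (dj j a * dj j b + dj j a * d x t b + dj j b * d x t a
          + d x t a * d x t b) ∂ν)
        = (∫ x in A j, (dj j a * dj j b + dj j a * d x t b + dj j b * d x t a) ∂ν)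
          + ∫ x in A j, d x t a * d x t b ∂ν :=
      integral_add (((hconst j _).add ((hint t b).integrableOn.const_mul _)).add
        ((hint t a).integrableOn.const_mul _)) ((hint2 t a b).integrableOn)
    have h5 : (∫ x in A j, (dj j a * dj j b + dj j a * d x t b + dj j b * d x t a) ∂ν)
        = (∫ x in A j, (dj j a * dj j b + dj j a * d x t b) ∂ν)
          + ∫ x in A j, dj j b * d x t a ∂ν :=
      integral_add ((hconst j _).add ((hint t b).integrableOn.const_mul _))
        ((hint t a).integrableOn.const_mul _)
    have h6 : (∫ x in A j, (dj j a * dj j b + dj j a * d x t b) ∂ν)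
        = (∫ x in A j, (dj j a * dj j b : ℝ) ∂ν) + ∫ x in A j, dj j a * d x t b ∂ν :=
      integral_add (hconst j _) ((hint t b).integrableOn.const_mul _)
    rw [h4, h5, h6, setIntegral_const, integral_const_mul, integral_const_mul]
    simp [smul_eq_mul, Measure.real]
  -- decompose global integrals
  rw [hdecomp _ (hint2 (t + τ) a b) _ himg himgd himgc,
    hdecomp _ (hint2 t a b) _ hAmeas hAdisj hAcover,
    ← Finset.sum_sub_distrib, ← Finset.sum_neg_distrib]
  refine Finset.sum_congr rfl fun j _ => ?_
  have hν0 : (ν (A j)).toReal ≠ 0 :=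
    ne_of_gt (ENNReal.toReal_pos (hApos j).ne' (measure_ne_top ν (A j)))
  rw [key1 j a, key1 j b, key2 j]
  field_simp
  ring
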